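/- Let R be an NI ring. Then R is weak Armendariz: whenever polynomials f = Σᵢ aᵢxⁱ and g = Σⱼ bⱼxʲ in the polynomial ring R[x] satisfy fg = 0, the product aᵢbⱼ is a nilpotent element of R for all i and j. (This is the instance of Theorem 4.4 of the paper for the skew PBW extension R[x] with identity endomorphism and zero derivation; the identity endomorphism makes R trivially weak Σ-rigid.) -/

import Mathlib

/-- If `R` is an NI ring (its nilpotent elements form a two-sided ideal), then `R` is weak
Armendariz: whenever `f·g = 0` in `R[x]`, every product of a coefficient of `f` with a
coefficient of `g` is nilpotent. -/
theorem stmt_8 {R : Type*} [Ring R]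
    (I : TwoSidedIdeal R) (hNI : ∀ x : R, x ∈ I ↔ IsNilpotent x)
    (f g : Polynomial R) (hfg : f * g = 0) :
    ∀ i j : ℕ, IsNilpotent (f.coeff i * g.coeff j) := by
  -- `I` is "radical": if `x * x ∈ I` then `x ∈ I`.
  have hpow : ∀ x : R, x * x ∈ I → x ∈ I := by
    intro x hx
    rw [hNI] at hx ⊢
    obtain ⟨n, hn⟩ := hx
    exact ⟨2 * n, by rw [pow_mul, pow_two]; exact hn⟩
  -- "reduced"-style commutation: `a * b ∈ I → b * a ∈ I`.
  have hcomm : ∀ a b : R, a * b ∈ I → b * a ∈ I := by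
    intro a b h
    apply hpow
    have : b * a * (b * a) = b * ((a * b) * a) := by
      simp only [mul_assoc]
    rw [this]
    exact I.mul_mem_left _ _ (I.mul_mem_right _ _ h)
  have key : ∀ k, ∀ i j, i + j = k → f.coeff i * g.coeff j ∈ I := by
    intro k
    induction k using Nat.strong_induction_on with
    | _ k ih =>
      have hsum : ∑ p ∈ Finset.HasAntidiagonal.antidiagonal k, f.coeff p.1 * g.coeff p.2 ∈ I := by
        rw [← Polynomial.coeff_mul, hfg]
        simp only [Polynomial.coeff_zero]; exact I.zero_mem
      have inner : ∀ m, m ≤ k → f.coeff (k - m) * g.coeff m ∈ I := by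
        intro m
        induction m using Nat.strong_induction_on with
        | _ m ihm =>
          intro hm
          have h1 : ∑ p ∈ Finset.HasAntidiagonal.antidiagonal k,
              f.coeff p.1 * g.coeff p.2 * g.coeff m ∈ I := by
            rw [← Finset.sum_mul]
            exact I.mul_mem_right _ _ hsum
          have hmem : ((k - m : ℕ), m) ∈ Finset.HasAntidiagonal.antidiagonal k := by
            rw [Finset.HasAntidiagonal.mem_antidiagonal]; omega
          have h2 : ∀ p ∈ (Finset.HasAntidiagonal.antidiagonal k).erase (k - m, m),
              f.coeff p.1 * g.coeff p.2 * g.coeff m ∈ I := by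
            intro p hp
            obtain ⟨hne, hpk⟩ := Finset.mem_erase.mp hp
            rw [Finset.HasAntidiagonal.mem_antidiagonal] at hpk
            rcases lt_trichotomy p.2 m with h | h | h
            · have hin := ihm p.2 h (le_trans (le_of_lt h) hm)
              have hp1 : p.1 = k - p.2 := by omega
              rw [hp1]
              exact I.mul_mem_right _ _ hin
            · exact absurd (Prod.ext (by omega) h) hne
            · have hlt : p.1 + m < k := by omega
              have h0 := ih (p.1 + m) hlt p.1 m rfl
              have hc := hcomm _ _ h0
              apply hpow
              have heq : f.coeff p.1 * g.coeff p.2 * g.coeff m *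
                  (f.coeff p.1 * g.coeff p.2 * g.coeff m) =
                  f.coeff p.1 * (g.coeff p.2 *
                    ((g.coeff m * f.coeff p.1) * (g.coeff p.2 * g.coeff m))) := by
                simp only [mul_assoc]
              rw [heq]
              exact I.mul_mem_left _ _ (I.mul_mem_left _ _
                (I.mul_mem_right _ _ hc))
          have herase : ∑ p ∈ (Finset.HasAntidiagonal.antidiagonal k).erase (k - m, m),
              f.coeff p.1 * g.coeff p.2 * g.coeff m ∈ I := I.finsetSum_mem _ _ h2
          have h3 : f.coeff (k - m) * g.coeff m * g.coeff m ∈ I := by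
            have hadd := Finset.add_sum_erase (Finset.HasAntidiagonal.antidiagonal k)
              (fun p => f.coeff p.1 * g.coeff p.2 * g.coeff m) hmem
            have : f.coeff (k - m) * g.coeff m * g.coeff m =
                (∑ p ∈ Finset.HasAntidiagonal.antidiagonal k, f.coeff p.1 * g.coeff p.2 * g.coeff m) -
                ∑ p ∈ (Finset.HasAntidiagonal.antidiagonal k).erase (k - m, m),
                  f.coeff p.1 * g.coeff p.2 * g.coeff m :=
              eq_sub_of_add_eq hadd
            rw [this]
            exact I.sub_mem h1 herase
          apply hpow
          have hdcd : g.coeff m * (f.coeff (k - m) * g.coeff m) ∈ I := hcomm _ _ h3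
          have heq2 : f.coeff (k - m) * g.coeff m * (f.coeff (k - m) * g.coeff m) =
              f.coeff (k - m) * (g.coeff m * (f.coeff (k - m) * g.coeff m)) := by
            simp only [mul_assoc]
          rw [heq2]
          exact I.mul_mem_left _ _ hdcd
      intro i j hij
      have hi : i = k - j := by omega
      rw [hi]
      exact inner j (by omega)
  intro i j
  exact (hNI _).mp (key (i + j) i j rfl)
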